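/- Let A, B : ℝ → matrices be differentiable trajectories satisfying the gradient flow τ A'(t) = G(t) B(t) − λ A(t) and τ B'(t) = G(t)ᵀ A(t) − λ B(t), where G(t) is an arbitrary continuous matrix-valued function and λ, τ > 0. Then A(t)ᵀA(t) − B(t)ᵀB(t) = e^{−2λt/τ} (A(0)ᵀA(0) − B(0)ᵀB(0)) for all t ≥ 0. -/

import Mathlib

open Matrix

/-- Squared Frobenius norm of a real matrix. -/
noncomputable def frobSq {m n : ℕ} (A : Matrix (Fin m) (Fin n) ℝ) : ℝ :=
  ∑ i, ∑ j, (A i j) ^ 2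

/-- Frobenius norm. -/
noncomputable def frobNorm {m n : ℕ} (A : Matrix (Fin m) (Fin n) ℝ) : ℝ :=
  Real.sqrt (frobSq A)

lemma wwT_posSemidef {m n : ℕ} (W : Matrix (Fin m) (Fin n) ℝ) :
    (W * Wᵀ).PosSemidef := by
  simpa [Matrix.conjTranspose_eq_transpose_of_trivial] using
    W.posSemidef_self_mul_conjTranspose

/-- Nuclear norm: trace of the PSD square root of `W * Wᵀ`. -/
noncomputable def nuclearNorm {m n : ℕ} (W : Matrix (Fin m) (Fin n) ℝ) : ℝ :=
  ((wwT_posSemidef W).1.eigenvectorUnitary.1 *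
    diagonal ((fun x : ℝ => (x : ℝ)) ∘ (√·) ∘ (wwT_posSemidef W).1.eigenvalues) *
    (star (wwT_posSemidef W).1.eigenvectorUnitary : Matrix (Fin m) (Fin m) ℝ)).trace

/-- Scalar ODE lemma: if `q' = c q` everywhere, then `q t = exp (c t) * q 0`. -/
lemma scalar_ode {q : ℝ → ℝ} {c : ℝ}
    (hq : ∀ t, HasDerivAt q (c * q t) t) (t : ℝ) :
    q t = Real.exp (c * t) * q 0 := by
  have hg : ∀ s, HasDerivAt (fun u => Real.exp (-(c * u)) * q u) 0 s := by
    intro s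
    have he : HasDerivAt (fun u => Real.exp (-(c * u))) (-c * Real.exp (-(c * s))) s := by
      have h1 : HasDerivAt (fun u : ℝ => -(c * u)) (-c) s := by
        simpa using ((hasDerivAt_id s).const_mul c).fun_neg
      simpa [mul_comm] using h1.exp
    have := he.fun_mul (hq s)
    exact this.congr_deriv (by ring)
  have hconst : ∀ s, Real.exp (-(c * s)) * q s = Real.exp (-(c * 0)) * q 0 := by
    intro s
    have : ∀ u : ℝ, deriv (fun v => Real.exp (-(c * v)) * q v) u = 0 :=
      fun u => (hg u).deriv
    have hdiff : Differentiable ℝ (fun v => Real.exp (-(c * v)) * q v) :=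
      fun u => (hg u).differentiableAt
    exact is_const_of_deriv_eq_zero hdiff this s 0
  have h := hconst t
  simp only [mul_zero, neg_zero, Real.exp_zero, one_mul] at h
  have hpos : Real.exp (-(c * t)) ≠ 0 := (Real.exp_pos _).ne'
  field_simp [Real.exp_neg] at h ⊢
  have hE : Real.exp (c * t) * Real.exp (-(c * t)) = 1 := by rw [← Real.exp_add]; simp
  linear_combination Real.exp (c * t) * h - q t * hE

/-- under gradient flow `τA' = GB − λA`, `τB' = GᵀA − λB` with
`G` an arbitrary continuous matrix-valued function and `λ, τ > 0`, the imbalance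
`AᵀA − BᵀB` decays exactly as `e^{−2λt/τ}` times its initial value. -/
theorem gradient_flow_balancedness {m n r : ℕ} (τ lam : ℝ) (hτ : 0 < τ) (hlam : 0 < lam)
    (A A' : ℝ → Matrix (Fin m) (Fin r) ℝ)
    (B B' : ℝ → Matrix (Fin n) (Fin r) ℝ)
    (G : ℝ → Matrix (Fin m) (Fin n) ℝ)
    (hG : ∀ i j, Continuous fun t => G t i j)
    (hderivA : ∀ t i j, HasDerivAt (fun s => A s i j) (A' t i j) t)
    (hderivB : ∀ t i j, HasDerivAt (fun s => B s i j) (B' t i j) t)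
    (hflowA : ∀ t, τ • A' t = G t * B t - lam • A t)
    (hflowB : ∀ t, τ • B' t = (G t)ᵀ * A t - lam • B t) :
    ∀ t, 0 ≤ t →
      (A t)ᵀ * A t - (B t)ᵀ * B t =
        Real.exp (-(2 * lam * t) / τ) • ((A 0)ᵀ * A 0 - (B 0)ᵀ * B 0) := by
  intro t ht
  -- matrix-level key identity for the derivative
  have key : ∀ s, τ • ((A' s)ᵀ * A s + (A s)ᵀ * A' s - ((B' s)ᵀ * B s + (B s)ᵀ * B' s))
      = (-(2 * lam)) • ((A s)ᵀ * A s - (B s)ᵀ * B s) := by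
    intro s
    have hA := hflowA s
    have hB := hflowB s
    have e1 : τ • ((A' s)ᵀ * A s) = (G s * B s - lam • A s)ᵀ * A s := by
      rw [← hA]; simp [Matrix.transpose_smul, Matrix.smul_mul]
    have e2 : τ • ((A s)ᵀ * A' s) = (A s)ᵀ * (G s * B s - lam • A s) := by
      rw [← hA]; simp [Matrix.mul_smul]
    have e3 : τ • ((B' s)ᵀ * B s) = ((G s)ᵀ * A s - lam • B s)ᵀ * B s := by
      rw [← hB]; simp [Matrix.transpose_smul, Matrix.smul_mul]
    have e4 : τ • ((B s)ᵀ * B' s) = (B s)ᵀ * ((G s)ᵀ * A s - lam • B s) := by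
      rw [← hB]; simp [Matrix.mul_smul]
    have expand : τ • ((A' s)ᵀ * A s + (A s)ᵀ * A' s - ((B' s)ᵀ * B s + (B s)ᵀ * B' s))
        = τ • ((A' s)ᵀ * A s) + τ • ((A s)ᵀ * A' s)
          - (τ • ((B' s)ᵀ * B s) + τ • ((B s)ᵀ * B' s)) := by
      simp [smul_sub, smul_add]
    rw [expand, e1, e2, e3, e4]
    simp only [Matrix.transpose_sub, Matrix.transpose_mul, Matrix.transpose_smul,
      Matrix.transpose_transpose, Matrix.sub_mul, Matrix.mul_sub,
      Matrix.smul_mul, Matrix.mul_smul, Matrix.mul_assoc]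
    module
  ext i j
  set c : ℝ := (-(2 * lam)) / τ with hc
  set q : ℝ → ℝ := fun s => ((A s)ᵀ * A s - (B s)ᵀ * B s) i j with hqdef
  have hq : ∀ s, HasDerivAt q (c * q s) s := by
    intro s
    have dA : HasDerivAt (fun u => ((A u)ᵀ * A u) i j)
        (((A' s)ᵀ * A s + (A s)ᵀ * A' s) i j) s := by
      have : HasDerivAt (fun u => ∑ k, A u k i * A u k j)
          (∑ k, (A' s k i * A s k j + A s k i * A' s k j)) s :=
        HasDerivAt.fun_sum fun k _ => (hderivA s k i).fun_mul (hderivA s k j)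
      simpa [Matrix.mul_apply, Matrix.transpose_apply, Matrix.add_apply,
        Finset.sum_add_distrib] using this
    have dB : HasDerivAt (fun u => ((B u)ᵀ * B u) i j)
        (((B' s)ᵀ * B s + (B s)ᵀ * B' s) i j) s := by
      have : HasDerivAt (fun u => ∑ k, B u k i * B u k j)
          (∑ k, (B' s k i * B s k j + B s k i * B' s k j)) s :=
        HasDerivAt.fun_sum fun k _ => (hderivB s k i).fun_mul (hderivB s k j)
      simpa [Matrix.mul_apply, Matrix.transpose_apply, Matrix.add_apply,
        Finset.sum_add_distrib] using this
    have dq : HasDerivAt q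
        (((A' s)ᵀ * A s + (A s)ᵀ * A' s - ((B' s)ᵀ * B s + (B s)ᵀ * B' s)) i j) s := by
      simpa [hqdef, Matrix.sub_apply] using dA.fun_sub dB
    convert dq using 1
    have hkey := congrFun (congrFun (key s) i) j
    simp only [Matrix.smul_apply, smul_eq_mul] at hkey
    have h2 : τ * ((A' s)ᵀ * A s + (A s)ᵀ * A' s - ((B' s)ᵀ * B s + (B s)ᵀ * B' s)) i j
        = -(2 * lam) * q s := by simpa [hqdef, Matrix.sub_apply] using hkey
    rw [hc, div_mul_eq_mul_div, div_eq_iff hτ.ne']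
    simp only [Matrix.sub_apply, Matrix.add_apply] at h2 ⊢
    linarith [h2]
  have := scalar_ode hq t
  have harg : c * t = -(2 * lam * t) / τ := by rw [hc]; ring
  simpa [hqdef, Matrix.sub_apply, Matrix.smul_apply, smul_eq_mul, harg] using this
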